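/- For every natural number i, the following identity holds in the ring of formal power series ℤ⟦X⟧: (1 − 2X)^{i+1} · (Σ_{n≥0} c(n,i) X^n) = (1 − X)^{i+1}. (Equivalently, Σ_{n≥0} c(n,i) x^n = ((1−x)/(1−2x))^{i+1}.) -/

import Mathlib

/-- `c(n,i)`: the number of weak compositions of `n` (finite lists of nonnegative
integers summing to `n`) with exactly `i` entries equal to `0`. -/
noncomputable def wc (n i : ℕ) : ℕ :=
  Set.ncard {l : List ℕ | l.sum = n ∧ l.count 0 = i}

private lemma length_le_count_add_sum (l : List ℕ) : l.length ≤ l.count 0 + l.sum := by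
  induction l with
  | nil => simp
  | cons a t ih =>
    rcases eq_or_ne a 0 with rfl | h0
    · simp [List.count_cons]; omega
    · simp [List.count_cons, h0]; omega

private lemma wcSet_finite (n i : ℕ) :
    {l : List ℕ | l.sum = n ∧ l.count 0 = i}.Finite := by
  have h1 : {l : List (Fin (n + 1)) | l.length ≤ n + i}.Finite :=
    List.finite_length_le _ _
  apply Set.Finite.subset (h1.image (List.map Fin.val))
  rintro l ⟨hs, hc⟩
  refine ⟨l.map (fun x => (⟨min x n, by omega⟩ : Fin (n + 1))), ?_, ?_⟩
  · simp only [Set.mem_setOf_eq, List.length_map]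
    have := length_le_count_add_sum l
    omega
  · rw [List.map_map]
    apply List.map_congr_left ?_ |>.trans l.map_id
    intro x hx
    have hxn : x ≤ n := hs ▸ List.le_sum_of_mem hx
    simp [Nat.min_eq_left hxn]

/-- The finset of lists with sum `n` and exactly `i` zeros. -/
private noncomputable def wcF (n i : ℕ) : Finset (List ℕ) :=
  (wcSet_finite n i).toFinset

private lemma mem_wcF {n i : ℕ} {l : List ℕ} :
    l ∈ wcF n i ↔ l.sum = n ∧ l.count 0 = i := by
  simp [wcF, Set.Finite.mem_toFinset]

private lemma wc_eq_card (n i : ℕ) : wc n i = (wcF n i).card := by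
  rw [wc, Set.ncard_eq_toFinset_card _ (wcSet_finite n i)]
  rfl

private lemma wc_zero (i : ℕ) : wc 0 i = 1 := by
  rw [wc_eq_card]
  have : wcF 0 i = {List.replicate i 0} := by
    ext l
    rw [mem_wcF, Finset.mem_singleton]
    constructor
    · rintro ⟨hs, hc⟩
      have hz : ∀ x ∈ l, x = 0 := by
        intro x hx
        have := List.le_sum_of_mem hx
        omega
      have hlen : l.count 0 = l.length := by
        rw [List.count_eq_length]
        intro x hx; exact (hz x hx).symm
      rw [List.eq_replicate_iff]
      exact ⟨by omega, hz⟩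
    · rintro rfl
      simp [List.count_replicate]
  rw [this, Finset.card_singleton]

/-- Head decomposition for `i = 0`, `n ≥ 1`. -/
private lemma wc_rec_zero (n : ℕ) :
    wc (n + 1) 0 = ∑ m ∈ Finset.range (n + 1), wc m 0 := by
  simp only [wc_eq_card]
  rw [Finset.card_nbij' (fun l => (⟨l.headI - 1, l.tail⟩ : Σ _ : ℕ, List ℕ))
      (fun p => (p.1 + 1) :: p.2)
      (t := (Finset.range (n + 1)).sigma (fun k => wcF (n - k) 0))]
  · rw [Finset.card_sigma,
      ← Finset.sum_range_reflect (fun j => (wcF j 0).card) (n + 1)]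
    apply Finset.sum_congr rfl
    intro k hk
    rw [show n + 1 - 1 - k = n - k from by omega]
  · intro l hl
    rw [Finset.mem_coe, mem_wcF] at hl
    obtain ⟨hs, hc⟩ := hl
    have hne : l ≠ [] := by rintro rfl; simp at hs
    obtain ⟨a, t, rfl⟩ := List.exists_cons_of_ne_nil hne
    simp only [List.sum_cons] at hs
    simp only [List.count_cons] at hc
    have ha : a ≠ 0 := by
      rintro rfl; simp at hc
    simp only [List.headI_cons, List.tail_cons, Finset.mem_coe, Finset.mem_sigma, Finset.mem_range, mem_wcF]
    refine ⟨by omega, by omega, ?_⟩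
    simp [ha] at hc
    omega
  · intro p hp
    simp only [Finset.mem_coe, Finset.mem_sigma, Finset.mem_range, mem_wcF] at hp
    obtain ⟨hk, hs, hc⟩ := hp
    rw [Finset.mem_coe, mem_wcF]
    constructor
    · simp only [List.sum_cons]; omega
    · simp only [List.count_cons]; simp [hc]
  · intro l hl
    rw [Finset.mem_coe, mem_wcF] at hl
    obtain ⟨hs, hc⟩ := hl
    have hne : l ≠ [] := by rintro rfl; simp at hs
    obtain ⟨a, t, rfl⟩ := List.exists_cons_of_ne_nil hne
    simp only [List.count_cons] at hc
    have ha : a ≠ 0 := by rintro rfl; simp at hc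
    simp only [List.headI_cons, List.tail_cons]
    congr 1
    omega
  · intro p _
    rfl

/-- Head decomposition for `i + 1` zeros, any `n`. -/
private lemma wc_rec_succ (n i : ℕ) :
    wc n (i + 1) = wc n i + ∑ m ∈ Finset.range n, wc m (i + 1) := by
  simp only [wc_eq_card]
  rw [Finset.card_nbij' (fun l => (⟨l.headI, l.tail⟩ : Σ _ : ℕ, List ℕ))
      (fun p => p.1 :: p.2)
      (t := (Finset.range (n + 1)).sigma
        (fun k => if k = 0 then wcF n i else wcF (n - k) (i + 1)))]
  · rw [Finset.card_sigma, Finset.sum_range_succ']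
    simp only [if_pos rfl]
    rw [add_comm]
    congr 1
    rw [← Finset.sum_range_reflect (fun j => (wcF j (i + 1)).card) n]
    apply Finset.sum_congr rfl
    intro k hk
    simp only [Finset.mem_range] at hk
    rw [if_neg (by omega)]
    rw [show n - (k + 1) = n - 1 - k from by omega]
  · intro l hl
    rw [Finset.mem_coe, mem_wcF] at hl
    obtain ⟨hs, hc⟩ := hl
    have hne : l ≠ [] := by rintro rfl; simp at hc
    obtain ⟨a, t, rfl⟩ := List.exists_cons_of_ne_nil hne
    simp only [List.sum_cons] at hs
    simp only [List.count_cons] at hc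
    simp only [List.headI_cons, List.tail_cons, Finset.mem_coe, Finset.mem_sigma, Finset.mem_range]
    refine ⟨by omega, ?_⟩
    rcases eq_or_ne a 0 with rfl | ha
    · rw [if_pos rfl, mem_wcF]
      simp at hc
      exact ⟨by omega, by omega⟩
    · rw [if_neg ha, mem_wcF]
      simp [ha] at hc
      exact ⟨by omega, by omega⟩
  · intro p hp
    simp only [Finset.mem_coe, Finset.mem_sigma, Finset.mem_range] at hp
    obtain ⟨hk, hmem⟩ := hp
    rw [Finset.mem_coe, mem_wcF]
    rcases eq_or_ne p.1 0 with h0 | h0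
    · rw [if_pos h0, mem_wcF] at hmem
      constructor
      · simp only [List.sum_cons, h0]; omega
      · simp only [List.count_cons, h0]; simp [hmem.2]
    · rw [if_neg h0, mem_wcF] at hmem
      constructor
      · simp only [List.sum_cons]; omega
      · simp only [List.count_cons]
        have : ¬ (p.1 == 0) = true := by simpa using h0
        rw [if_neg this, hmem.2]
  · intro l hl
    rw [Finset.mem_coe, mem_wcF] at hl
    have hne : l ≠ [] := by
      rintro rfl
      simp at hl
    obtain ⟨a, t, rfl⟩ := List.exists_cons_of_ne_nil hne
    rfl
  · intro p _
    rfl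

private noncomputable def A (i : ℕ) : PowerSeries ℤ :=
  PowerSeries.mk (fun n => (wc n i : ℤ))

open PowerSeries in
private lemma wc_base : (1 - 2 * X : PowerSeries ℤ) * A 0 = 1 - X := by
  have expand : (1 - 2 * X : PowerSeries ℤ) * A 0 = A 0 - X * A 0 - X * A 0 := by ring
  rw [expand]
  ext n
  rcases n with _ | n
  · simp [A, wc_zero]
  rcases n with _ | m
  · simp only [map_sub, coeff_succ_X_mul, A, coeff_mk, coeff_one, coeff_X]
    rw [wc_rec_zero 0]
    simp [wc_zero]
  · simp only [map_sub, coeff_succ_X_mul, A, coeff_mk, coeff_one, coeff_X]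
    have h1 := wc_rec_zero (m + 1)
    have h2 := wc_rec_zero m
    rw [Finset.sum_range_succ] at h1
    simp only [if_neg (by omega : ¬ (m + 2 = 0)), if_neg (by omega : ¬ (m + 2 = 1))]
    omega

open PowerSeries in
private lemma wc_step (i : ℕ) :
    (1 - 2 * X : PowerSeries ℤ) * A (i + 1) = (1 - X) * A i := by
  have expand1 : (1 - 2 * X : PowerSeries ℤ) * A (i + 1)
      = A (i + 1) - X * A (i + 1) - X * A (i + 1) := by ring
  have expand2 : (1 - X : PowerSeries ℤ) * A i = A i - X * A i := by ring
  rw [expand1, expand2]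
  ext n
  rcases n with _ | n
  · simp [A, wc_zero]
  · simp only [map_sub, coeff_succ_X_mul, A, coeff_mk]
    have h1 := wc_rec_succ (n + 1) i
    have h2 := wc_rec_succ n i
    rw [Finset.sum_range_succ] at h1
    omega

theorem stmt7 (i : ℕ) :
    ((1 - 2 * PowerSeries.X : PowerSeries ℤ)) ^ (i + 1) *
        PowerSeries.mk (fun n => (wc n i : ℤ)) =
      (1 - PowerSeries.X : PowerSeries ℤ) ^ (i + 1) := by
  induction i with
  | zero => simpa [A] using wc_base
  | succ i ih =>
    have hA : PowerSeries.mk (fun n => (wc n (i + 1) : ℤ)) = A (i + 1) := rfl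
    have ih' : (1 - 2 * PowerSeries.X : PowerSeries ℤ) ^ (i + 1) * A i =
        (1 - PowerSeries.X : PowerSeries ℤ) ^ (i + 1) := ih
    rw [hA]
    calc (1 - 2 * PowerSeries.X : PowerSeries ℤ) ^ (i + 1 + 1) * A (i + 1)
        = (1 - 2 * PowerSeries.X : PowerSeries ℤ) ^ (i + 1) *
            ((1 - 2 * PowerSeries.X) * A (i + 1)) := by ring
      _ = (1 - 2 * PowerSeries.X : PowerSeries ℤ) ^ (i + 1) *
            ((1 - PowerSeries.X) * A i) := by rw [wc_step]
      _ = (1 - PowerSeries.X : PowerSeries ℤ) *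
            ((1 - 2 * PowerSeries.X) ^ (i + 1) * A i) := by ring
      _ = (1 - PowerSeries.X : PowerSeries ℤ) * (1 - PowerSeries.X) ^ (i + 1) := by rw [ih']
      _ = (1 - PowerSeries.X : PowerSeries ℤ) ^ (i + 1 + 1) := by ring
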